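/- Let p be an odd prime and let L₁,...,L_m be linear forms in d variables over 𝔽_p whose squares LᵢᵀLᵢ are linearly DEPENDENT over 𝔽_p, with the maximal square-independent subsystem having size ℓ < m. Let A = {x ∈ 𝔽_p^n : xᵀx = 0}. Then the probability, over random x ∈ (𝔽_p^n)^d, that Lᵢ(x) ∈ A for every i is at least p^{-ℓ} − p^{-n/2}; in particular, for n large this exceeds α^m + ε for some ε > 0 depending only on p, ℓ, m, where α is the density of A. -/

import Mathlib

open Finset

namespace QESD
set_option maxHeartbeats 1000000

variable {p : ℕ}

def Qf {p d : ℕ} (B : Fin d × Fin d → ZMod p) (v : Fin d → ZMod p) : ZMod p :=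
  ∑ rs : Fin d × Fin d, B rs * (v rs.1 * v rs.2)

def rowf {p d : ℕ} (B : Fin d × Fin d → ZMod p) (h : Fin d → ZMod p) (s : Fin d) : ZMod p :=
  ∑ r, B (r, s) * h r

lemma two_ne_zero'' [Fact p.Prime] (hp : Odd p) : (2 : ZMod p) ≠ 0 := by
  intro h
  have h2 : ((2 : ℕ) : ZMod p) = 0 := by exact_mod_cast h
  rw [ZMod.natCast_eq_zero_iff] at h2
  have := (Nat.prime_dvd_prime_iff_eq (Fact.out) Nat.prime_two).mp h2
  rw [this] at hp
  simp [Nat.odd_iff] at hp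

lemma Qexp {d : ℕ} (B : Fin d × Fin d → ZMod p) (v : Fin d → ZMod p) :
    Qf B v = ∑ r, ∑ s, B (r, s) * v r * v s := by
  rw [Qf, Fintype.sum_prod_type]
  exact Finset.sum_congr rfl fun r _ => Finset.sum_congr rfl fun s _ => by ring

lemma Qrow {d : ℕ} (B : Fin d × Fin d → ZMod p) (h : Fin d → ZMod p) :
    Qf B h = ∑ s, rowf B h s * h s := by
  rw [Qexp, Finset.sum_comm]
  refine Finset.sum_congr rfl fun s _ => ?_
  rw [rowf, Finset.sum_mul]

lemma Qkey {d : ℕ} (B : Fin d × Fin d → ZMod p) (hsym : ∀ r s, B (r, s) = B (s, r))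
    (w h : Fin d → ZMod p) :
    Qf B (w + h) = Qf B w + Qf B h + ∑ s, (2 * rowf B h s) * w s := by
  have swap : ∑ r, ∑ s, B (r, s) * w r * h s = ∑ r, ∑ s, B (r, s) * h r * w s := by
    rw [Finset.sum_comm]
    exact Finset.sum_congr rfl fun s _ => Finset.sum_congr rfl fun r _ => by
      rw [hsym s r]; ring
  have e2 : ∑ s, (2 * rowf B h s) * w s
      = (∑ r, ∑ s, B (r, s) * h r * w s) + (∑ r, ∑ s, B (r, s) * h r * w s) := by
    have e3 : ∀ s, (2 * rowf B h s) * w s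
        = (∑ r, B (r, s) * h r * w s) + (∑ r, B (r, s) * h r * w s) := by
      intro s
      rw [rowf, two_mul, add_mul, Finset.sum_mul]
    calc ∑ s, (2 * rowf B h s) * w s
        = ∑ s, ((∑ r, B (r, s) * h r * w s) + (∑ r, B (r, s) * h r * w s)) :=
          Finset.sum_congr rfl fun s _ => e3 s
      _ = (∑ s, ∑ r, B (r, s) * h r * w s) + (∑ s, ∑ r, B (r, s) * h r * w s) :=
          Finset.sum_add_distrib
      _ = _ := by congr 1 <;> rw [Finset.sum_comm]
  calc Qf B (w + h)
      = (∑ r, ∑ s, B (r, s) * w r * w s) + (∑ r, ∑ s, B (r, s) * h r * h s)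
        + ((∑ r, ∑ s, B (r, s) * w r * h s) + (∑ r, ∑ s, B (r, s) * h r * w s)) := by
        rw [Qexp]
        rw [← Finset.sum_add_distrib, ← Finset.sum_add_distrib, ← Finset.sum_add_distrib]
        refine Finset.sum_congr rfl fun r _ => ?_
        rw [← Finset.sum_add_distrib, ← Finset.sum_add_distrib, ← Finset.sum_add_distrib]
        refine Finset.sum_congr rfl fun s _ => ?_
        simp only [Pi.add_apply]
        ring
    _ = (∑ r, ∑ s, B (r, s) * w r * w s) + (∑ r, ∑ s, B (r, s) * h r * h s)
        + ((∑ r, ∑ s, B (r, s) * h r * w s) + (∑ r, ∑ s, B (r, s) * h r * w s)) := by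
        rw [swap]
    _ = Qf B w + Qf B h + ∑ s, (2 * rowf B h s) * w s := by
        rw [← Qexp, ← Qexp, ← e2]

lemma addChar_map_sum {ι G M : Type*} [AddCommMonoid G] [CommMonoid M]
    (ψ : AddChar G M) (s : Finset ι) (f : ι → G) :
    ψ (∑ i ∈ s, f i) = ∏ i ∈ s, ψ (f i) := by
  induction s using Finset.cons_induction with
  | empty => simp
  | cons a s ha ih => rw [Finset.sum_cons, Finset.prod_cons, ψ.map_add_eq_mul, ih]

lemma norm_std [Fact p.Prime] (a : ZMod p) : ‖ZMod.stdAddChar a‖ = 1 := by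
  rw [ZMod.stdAddChar_apply, ]; exact Circle.norm_coe _

lemma conj_std [Fact p.Prime] (a : ZMod p) :
    (starRingEnd ℂ) (ZMod.stdAddChar a) = ZMod.stdAddChar (-a) := by
  rw [AddChar.map_neg_eq_inv, Complex.inv_eq_conj (norm_std a)]

noncomputable def T (p : ℕ) [NeZero p] (d : ℕ) (B : Fin d × Fin d → ZMod p) : ℂ :=
  ∑ v : Fin d → ZMod p, ZMod.stdAddChar (Qf B v)

lemma T_zero [Fact p.Prime] (d : ℕ) : T p d 0 = (p : ℂ) ^ d := by
  simp [T, Qf, ZMod.card]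

lemma sum_lin [Fact p.Prime] (d : ℕ) (a : Fin d → ZMod p) :
    ∑ w : Fin d → ZMod p, ZMod.stdAddChar (∑ s, a s * w s)
      = if a = 0 then (p : ℂ) ^ d else 0 := by
  have h1 : ∀ w : Fin d → ZMod p, ZMod.stdAddChar (∑ s, a s * w s)
      = ∏ s, ZMod.stdAddChar (a s * w s) := fun w => addChar_map_sum _ _ _
  simp_rw [h1]
  rw [← Fintype.prod_sum (fun s (t : ZMod p) => ZMod.stdAddChar (a s * t))]
  have h2 : ∀ s, ∑ t : ZMod p, ZMod.stdAddChar (a s * t)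
      = if a s = 0 then (p : ℂ) else 0 := by
    intro s
    simp_rw [mul_comm (a s)]
    rw [AddChar.sum_mulShift _ (ZMod.isPrimitive_stdAddChar p)]
    simp [ZMod.card]
  simp_rw [h2]
  by_cases h : a = 0
  · simp [h]
  · obtain ⟨s, hs⟩ : ∃ s, a s ≠ 0 := by
      by_contra hc; push_neg at hc; exact h (funext hc)
    rw [if_neg h]
    exact Finset.prod_eq_zero (mem_univ s) (by simp [hs])

lemma conj_T [Fact p.Prime] (d : ℕ) (B : Fin d × Fin d → ZMod p) :
    (starRingEnd ℂ) (T p d B) = ∑ w : Fin d → ZMod p, ZMod.stdAddChar (- Qf B w) := by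
  rw [T, map_sum]
  exact Finset.sum_congr rfl fun w _ => conj_std _

lemma T_mul_conj [Fact p.Prime] (hp : Odd p) (d : ℕ) (B : Fin d × Fin d → ZMod p)
    (hsym : ∀ r s, B (r, s) = B (s, r)) :
    T p d B * (starRingEnd ℂ) (T p d B)
      = (p : ℂ) ^ d * ((univ.filter fun h : Fin d → ZMod p => rowf B h = 0).card : ℂ) := by
  classical
  rw [conj_T, T, Finset.sum_mul_sum]
  have step1 : ∀ v w : Fin d → ZMod p,
      ZMod.stdAddChar (Qf B v) * ZMod.stdAddChar (- Qf B w)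
        = ZMod.stdAddChar (Qf B v - Qf B w) := by
    intro v w
    rw [← AddChar.map_add_eq_mul, sub_eq_add_neg]
  simp_rw [step1]
  rw [Finset.sum_comm]
  have step2 : ∀ w : Fin d → ZMod p,
      ∑ v : Fin d → ZMod p, ZMod.stdAddChar (Qf B v - Qf B w)
        = ∑ h : Fin d → ZMod p,
            ZMod.stdAddChar (Qf B h) * ZMod.stdAddChar (∑ s, (2 * rowf B h s) * w s) := by
    intro w
    rw [← Fintype.sum_equiv (Equiv.addLeft w)
      (fun h => ZMod.stdAddChar (Qf B (w + h) - Qf B w))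
      (fun v => ZMod.stdAddChar (Qf B v - Qf B w)) (fun h => rfl)]
    refine Finset.sum_congr rfl fun h _ => ?_
    rw [Qkey B hsym w h]
    rw [show Qf B w + Qf B h + (∑ s, (2 * rowf B h s) * w s) - Qf B w
        = Qf B h + ∑ s, (2 * rowf B h s) * w s by ring]
    rw [AddChar.map_add_eq_mul]
  simp_rw [step2]
  rw [Finset.sum_comm]
  have step3 : ∀ h : Fin d → ZMod p,
      ∑ w : Fin d → ZMod p,
        ZMod.stdAddChar (Qf B h) * ZMod.stdAddChar (∑ s, (2 * rowf B h s) * w s)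
      = if rowf B h = 0 then (p : ℂ) ^ d else 0 := by
    intro h
    rw [← Finset.mul_sum, sum_lin d (fun s => 2 * rowf B h s)]
    have hcond : ((fun s => 2 * rowf B h s) = 0) ↔ rowf B h = 0 := by
      constructor
      · intro hc
        funext s
        have := congrFun hc s
        simp only [Pi.zero_apply] at this ⊢
        rcases mul_eq_zero.mp this with h2 | h0
        · exact absurd h2 (two_ne_zero'' hp)
        · exact h0
      · intro hc
        funext s
        simp [congrFun hc s]
    by_cases hr : rowf B h = 0
    · rw [if_pos (hcond.mpr hr), if_pos hr]
      have : Qf B h = 0 := by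
        rw [Qrow]
        exact Finset.sum_eq_zero fun s _ => by simp [congrFun hr s]
      rw [this, AddChar.map_zero_eq_one, one_mul]
    · rw [if_neg (fun hc => hr (hcond.mp hc)), if_neg hr, mul_zero]
  simp_rw [step3]
  rw [← Finset.sum_filter]
  rw [Finset.sum_const, nsmul_eq_mul, mul_comm]

lemma card_row_kernel_le [Fact p.Prime] (d : ℕ) (B : Fin d × Fin d → ZMod p) (hB : B ≠ 0) :
    ((univ.filter fun h : Fin d → ZMod p => rowf B h = 0).card : ℝ) ≤ (p : ℝ) ^ (d - 1) := by
  classical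
  obtain ⟨rs, hrs⟩ : ∃ rs, B rs ≠ 0 := by
    by_contra hc; push_neg at hc; exact hB (funext hc)
  obtain ⟨r, s⟩ := rs
  set A : Matrix (Fin d) (Fin d) (ZMod p) := Matrix.of fun s r => B (r, s) with hA
  have hrowA : ∀ h, rowf B h = A.mulVec h := by
    intro h; funext t
    rw [rowf]
    simp [Matrix.mulVec, dotProduct, hA]
  set K : Submodule (ZMod p) (Fin d → ZMod p) := LinearMap.ker A.mulVecLin with hK
  haveI : Fintype K := Fintype.ofFinite _
  have hcard : (univ.filter fun h : Fin d → ZMod p => rowf B h = 0).card = Fintype.card K := by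
    refine (Fintype.card_of_subtype _ ?_).symm
    intro x
    simp only [Finset.mem_filter, Finset.mem_univ, true_and, hrowA, hK,
      LinearMap.mem_ker, Matrix.mulVecLin_apply]
  have hKne : K ≠ ⊤ := by
    intro htop
    have hmem : Pi.single r (1 : ZMod p) ∈ K := htop ▸ Submodule.mem_top
    rw [hK, LinearMap.mem_ker, Matrix.mulVecLin_apply] at hmem
    have : rowf B (Pi.single r 1) s = 0 := by
      rw [hrowA]; rw [hmem]; rfl
    rw [rowf] at this
    simp [Pi.single_apply, mul_ite, Finset.sum_ite_eq'] at this
    exact hrs this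
  have hfin : Module.finrank (ZMod p) K < d := by
    have := Submodule.finrank_lt (K := ZMod p) hKne
    simpa [Module.finrank_pi] using this
  have hcard2 : Fintype.card K = p ^ Module.finrank (ZMod p) K := by
    have := Module.card_eq_pow_finrank (K := ZMod p) (V := K)
    simpa [ZMod.card] using this
  rw [hcard, hcard2]
  have hp1 : (1 : ℝ) ≤ (p : ℝ) := by
    exact_mod_cast (Fact.out : p.Prime).one_le
  calc ((p ^ Module.finrank (ZMod p) K : ℕ) : ℝ) = (p : ℝ) ^ Module.finrank (ZMod p) K := by
        push_cast; ring
    _ ≤ (p : ℝ) ^ (d - 1) := by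
        apply pow_le_pow_right₀ hp1
        omega

lemma normSq_T_le [Fact p.Prime] (hp : Odd p) (d : ℕ) (B : Fin d × Fin d → ZMod p)
    (hsym : ∀ r s, B (r, s) = B (s, r)) (hB : B ≠ 0) :
    Complex.normSq (T p d B) ≤ (p : ℝ) ^ (2 * d - 1) := by
  classical
  have hmc := T_mul_conj hp d B hsym
  rw [Complex.mul_conj] at hmc
  have hre : (Complex.normSq (T p d B) : ℝ)
      = (p : ℝ) ^ d * ((univ.filter fun h : Fin d → ZMod p => rowf B h = 0).card : ℝ) := by
    exact_mod_cast hmc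
  rw [hre]
  have hd : 1 ≤ d := by
    obtain ⟨rs, hrs⟩ : ∃ rs, B rs ≠ 0 := by
      by_contra hc; push_neg at hc; exact hB (funext hc)
    have := rs.1.pos
    omega
  have hbound := card_row_kernel_le d B hB
  have hp0 : (0 : ℝ) ≤ (p : ℝ) ^ d := by positivity
  calc (p : ℝ) ^ d * ((univ.filter fun h : Fin d → ZMod p => rowf B h = 0).card : ℝ)
      ≤ (p : ℝ) ^ d * (p : ℝ) ^ (d - 1) := by
        exact mul_le_mul_of_nonneg_left hbound hp0
    _ = (p : ℝ) ^ (2 * d - 1) := by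
        rw [← pow_add]
        congr 1
        omega

lemma count_identity [Fact p.Prime] (d n : ℕ) {κ : Type*} [Fintype κ] [DecidableEq κ]
    (G : κ → Fin d × Fin d → ZMod p) :
    (p : ℂ) ^ (Fintype.card κ) *
      ((univ.filter fun x : Fin d → Fin n → ZMod p =>
        ∀ k, (∑ rs : Fin d × Fin d, G k rs * (∑ j, x rs.1 j * x rs.2 j)) = 0).card : ℂ)
    = ∑ ξ : κ → ZMod p, (T p d (∑ k, ξ k • G k)) ^ n := by
  classical
  set q : κ → (Fin d → Fin n → ZMod p) → ZMod p :=
    fun k x => ∑ rs : Fin d × Fin d, G k rs * (∑ j, x rs.1 j * x rs.2 j) with hq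
  have step0 : ((univ.filter fun x : Fin d → Fin n → ZMod p => ∀ k, q k x = 0).card : ℂ)
      = ∑ x : Fin d → Fin n → ZMod p, if (∀ k, q k x = 0) then 1 else 0 := by
    rw [Finset.sum_boole]
  rw [step0, Finset.mul_sum]
  have step1 : ∀ x : Fin d → Fin n → ZMod p,
      (p : ℂ) ^ (Fintype.card κ) * (if (∀ k, q k x = 0) then 1 else 0)
      = ∑ ξ : κ → ZMod p, ZMod.stdAddChar (∑ k, ξ k * q k x) := by
    intro x
    have e1 : (p : ℂ) ^ (Fintype.card κ) * (if (∀ k, q k x = 0) then 1 else 0)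
        = ∏ k, (if q k x = 0 then (p : ℂ) else 0) := by
      by_cases hx : ∀ k, q k x = 0
      · rw [if_pos hx, mul_one]
        rw [Finset.prod_congr rfl (fun k _ => if_pos (hx k))]
        simp
      · rw [if_neg hx, mul_zero]
        obtain ⟨k, hk⟩ := not_forall.mp hx
        exact (Finset.prod_eq_zero (mem_univ k) (by simp [hk])).symm
    rw [e1]
    have e2 : ∀ k, (if q k x = 0 then (p : ℂ) else 0)
        = ∑ t : ZMod p, ZMod.stdAddChar (t * q k x) := by
      intro k
      rw [AddChar.sum_mulShift _ (ZMod.isPrimitive_stdAddChar p)]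
      simp [ZMod.card]
    rw [Finset.prod_congr rfl (fun k _ => e2 k)]
    rw [Fintype.prod_sum (fun k (t : ZMod p) => ZMod.stdAddChar (t * q k x))]
    exact Finset.sum_congr rfl fun ξ _ => (addChar_map_sum _ _ _).symm
  rw [Finset.sum_congr rfl (fun x _ => step1 x), Finset.sum_comm]
  refine Finset.sum_congr rfl fun ξ _ => ?_
  -- inner: ∑_x ψ (∑ k, ξ k * q k x) = T(B)^n
  set B : Fin d × Fin d → ZMod p := ∑ k, ξ k • G k with hB
  have hBrs : ∀ rs, B rs = ∑ k, ξ k * G k rs := by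
    intro rs
    rw [hB, Finset.sum_apply]
    exact Finset.sum_congr rfl fun k _ => by simp [Pi.smul_apply, smul_eq_mul]
  have lin : ∀ x, ∑ k, ξ k * q k x = ∑ j, Qf B (fun u => x u j) := by
    intro x
    have h1 : ∑ k, ξ k * q k x
        = ∑ rs : Fin d × Fin d, B rs * (∑ j, x rs.1 j * x rs.2 j) := by
      calc ∑ k, ξ k * q k x
          = ∑ k, ∑ rs : Fin d × Fin d, ξ k * (G k rs * (∑ j, x rs.1 j * x rs.2 j)) := by
            refine Finset.sum_congr rfl fun k _ => ?_
            simp only [hq]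
            exact Finset.mul_sum _ _ _
        _ = ∑ rs : Fin d × Fin d, ∑ k, ξ k * (G k rs * (∑ j, x rs.1 j * x rs.2 j)) :=
            Finset.sum_comm
        _ = ∑ rs : Fin d × Fin d, B rs * (∑ j, x rs.1 j * x rs.2 j) := by
            refine Finset.sum_congr rfl fun rs _ => ?_
            rw [hBrs rs, Finset.sum_mul]
            exact Finset.sum_congr rfl fun k _ => by ring
    rw [h1]
    have h2 : ∀ rs : Fin d × Fin d, B rs * (∑ j, x rs.1 j * x rs.2 j)
        = ∑ j, B rs * (x rs.1 j * x rs.2 j) := fun rs => Finset.mul_sum _ _ _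
    rw [Finset.sum_congr rfl (fun rs _ => h2 rs), Finset.sum_comm]
    exact Finset.sum_congr rfl fun j _ => rfl
  rw [Finset.sum_congr rfl (fun x _ => congrArg _ (lin x))]
  have e3 : ∀ x : Fin d → Fin n → ZMod p,
      ZMod.stdAddChar (∑ j, Qf B (fun u => x u j))
        = ∏ j, ZMod.stdAddChar (Qf B (fun u => x u j)) := fun x => addChar_map_sum _ _ _
  rw [Finset.sum_congr rfl (fun x _ => e3 x)]
  rw [T, Fintype.sum_pow]
  exact (Fintype.sum_equiv (Equiv.piComm (fun (_ : Fin n) (_ : Fin d) => ZMod p))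
    (fun y => ∏ j, ZMod.stdAddChar (Qf B (y j)))
    (fun x => ∏ j, ZMod.stdAddChar (Qf B (fun u => x u j)))
    (fun y => rfl)).symm

lemma sqrt_pow_eq [Fact p.Prime] {d : ℕ} (hd : 1 ≤ d) (n : ℕ) :
    (Real.sqrt ((p : ℝ) ^ (2 * d - 1))) ^ n
      = (p : ℝ) ^ (d * n) * (p : ℝ) ^ (-(n : ℝ) / 2) := by
  have hp0 : (0 : ℝ) < p := by
    exact_mod_cast (Fact.out : p.Prime).pos
  have hc : ((2 * d - 1 : ℕ) : ℝ) = 2 * (d : ℝ) - 1 := by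
    have : (1 : ℕ) ≤ 2 * d := by omega
    push_cast [Nat.cast_sub this]
    ring
  have h1 : (p : ℝ) ^ (2 * d - 1) = (p : ℝ) ^ ((2 * (d : ℝ) - 1) : ℝ) := by
    rw [← Real.rpow_natCast (p : ℝ) (2 * d - 1), hc]
  rw [h1, Real.sqrt_eq_rpow, ← Real.rpow_mul hp0.le, ← Real.rpow_natCast
    ((p : ℝ) ^ ((2 * (d : ℝ) - 1) * (1 / 2) : ℝ)) n, ← Real.rpow_mul hp0.le]
  rw [← Real.rpow_natCast (p : ℝ) (d * n), ← Real.rpow_add hp0]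
  congr 1
  push_cast
  ring

lemma count_bound [Fact p.Prime] (hp : Odd p) (d n : ℕ) {κ : Type*} [Fintype κ]
    [DecidableEq κ] (G : κ → Fin d × Fin d → ZMod p)
    (hsym : ∀ k r s, G k (r, s) = G k (s, r))
    (hind : ∀ ξ : κ → ZMod p, ξ ≠ 0 → (∑ k, ξ k • G k) ≠ 0) :
    |((univ.filter fun x : Fin d → Fin n → ZMod p =>
        ∀ k, (∑ rs : Fin d × Fin d, G k rs * (∑ j, x rs.1 j * x rs.2 j)) = 0).card : ℝ)
        * (p : ℝ) ^ (Fintype.card κ) - (p : ℝ) ^ (d * n)|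
      ≤ ((p : ℝ) ^ (Fintype.card κ) - 1)
          * ((p : ℝ) ^ (d * n) * (p : ℝ) ^ (-(n : ℝ) / 2)) := by
  classical
  set N : ℕ := (univ.filter fun x : Fin d → Fin n → ZMod p =>
      ∀ k, (∑ rs : Fin d × Fin d, G k rs * (∑ j, x rs.1 j * x rs.2 j)) = 0).card with hN
  have hid := count_identity (p := p) d n G
  rw [← hN] at hid
  have hzero : T p d (∑ k, (0 : κ → ZMod p) k • G k) ^ n = (p : ℂ) ^ (d * n) := by
    have : (∑ k, (0 : κ → ZMod p) k • G k) = 0 := by simp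
    rw [this, T_zero, ← pow_mul]
  have hsplit : (p : ℂ) ^ (Fintype.card κ) * (N : ℂ) - (p : ℂ) ^ (d * n)
      = ∑ ξ ∈ (univ : Finset (κ → ZMod p)).erase 0, (T p d (∑ k, ξ k • G k)) ^ n := by
    rw [hid, ← Finset.add_sum_erase _ _ (mem_univ (0 : κ → ZMod p)), hzero]
    ring
  -- take norms
  have hnorm : |(N : ℝ) * (p : ℝ) ^ (Fintype.card κ) - (p : ℝ) ^ (d * n)|
      = ‖(p : ℂ) ^ (Fintype.card κ) * (N : ℂ) - (p : ℂ) ^ (d * n)‖ := by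
    have : (p : ℂ) ^ (Fintype.card κ) * (N : ℂ) - (p : ℂ) ^ (d * n)
        = (((N : ℝ) * (p : ℝ) ^ (Fintype.card κ) - (p : ℝ) ^ (d * n) : ℝ) : ℂ) := by
      push_cast; ring
    rw [this, Complex.norm_real, Real.norm_eq_abs]
  rw [hnorm, hsplit]
  have hterm : ∀ ξ ∈ (univ : Finset (κ → ZMod p)).erase 0,
      ‖(T p d (∑ k, ξ k • G k)) ^ n‖ ≤ (p : ℝ) ^ (d * n) * (p : ℝ) ^ (-(n : ℝ) / 2) := by
    intro ξ hξ
    have hξ0 : ξ ≠ 0 := Finset.ne_of_mem_erase hξ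
    set B := ∑ k, ξ k • G k with hB
    have hBne : B ≠ 0 := hind ξ hξ0
    have hBsym : ∀ r s, B (r, s) = B (s, r) := by
      intro r s
      rw [hB, Finset.sum_apply, Finset.sum_apply]
      exact Finset.sum_congr rfl fun k _ => by
        simp [Pi.smul_apply, hsym k r s]
    have hd : 1 ≤ d := by
      rcases Nat.eq_zero_or_pos d with h0 | h1
      · subst h0
        exact absurd (funext fun rs => (rs.1).elim0) hBne
      · exact h1
    have h1 : ‖T p d B‖ ≤ Real.sqrt ((p : ℝ) ^ (2 * d - 1)) := by
      rw [Complex.norm_def]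
      exact Real.sqrt_le_sqrt (normSq_T_le hp d B hBsym hBne)
    calc ‖(T p d B) ^ n‖ = ‖T p d B‖ ^ n := norm_pow _ _
      _ ≤ (Real.sqrt ((p : ℝ) ^ (2 * d - 1))) ^ n :=
          pow_le_pow_left₀ (norm_nonneg _) h1 n
      _ = (p : ℝ) ^ (d * n) * (p : ℝ) ^ (-(n : ℝ) / 2) := sqrt_pow_eq hd n
  calc ‖∑ ξ ∈ (univ : Finset (κ → ZMod p)).erase 0, (T p d (∑ k, ξ k • G k)) ^ n‖
      ≤ ∑ ξ ∈ (univ : Finset (κ → ZMod p)).erase 0, ‖(T p d (∑ k, ξ k • G k)) ^ n‖ :=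
        norm_sum_le _ _
    _ ≤ ∑ _ξ ∈ (univ : Finset (κ → ZMod p)).erase 0,
          ((p : ℝ) ^ (d * n) * (p : ℝ) ^ (-(n : ℝ) / 2)) :=
        Finset.sum_le_sum hterm
    _ = ((p : ℝ) ^ (Fintype.card κ) - 1)
          * ((p : ℝ) ^ (d * n) * (p : ℝ) ^ (-(n : ℝ) / 2)) := by
        rw [Finset.sum_const, nsmul_eq_mul]
        congr 1
        rw [Finset.card_erase_of_mem (mem_univ _), Finset.card_univ, Fintype.card_fun,
          ZMod.card]
        have h1 : 1 ≤ p ^ (Fintype.card κ) :=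
          Nat.one_le_pow _ _ (Fact.out : p.Prime).pos
        push_cast [Nat.cast_sub h1]
        ring

lemma expand_sq {d n : ℕ} (c : Fin d → ZMod p) (x : Fin d → Fin n → ZMod p) :
    ∑ j, (∑ u, c u * x u j) ^ 2
      = ∑ rs : Fin d × Fin d, (c rs.1 * c rs.2) * (∑ j, x rs.1 j * x rs.2 j) := by
  calc ∑ j, (∑ u, c u * x u j) ^ 2
      = ∑ j, ∑ rs : Fin d × Fin d, (c rs.1 * c rs.2) * (x rs.1 j * x rs.2 j) := by
        refine Finset.sum_congr rfl fun j _ => ?_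
        rw [sq, Finset.sum_mul_sum, Fintype.sum_prod_type]
        exact Finset.sum_congr rfl fun r _ => Finset.sum_congr rfl fun s _ => by ring
    _ = ∑ rs : Fin d × Fin d, ∑ j, (c rs.1 * c rs.2) * (x rs.1 j * x rs.2 j) :=
        Finset.sum_comm
    _ = _ := Finset.sum_congr rfl fun rs _ => (Finset.mul_sum _ _ _).symm

-- the probability lower bound, applied form
lemma P_lower [Fact p.Prime] (hp : Odd p) (d m ℓ : ℕ) (c : Fin m → Fin d → ZMod p)
    (S : Finset (Fin m)) (hS : S.card = ℓ)
    (hind : LinearIndependent (ZMod p)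
      (fun i : S => fun rs : Fin d × Fin d => c i.1 rs.1 * c i.1 rs.2))
    (hmax : ∀ i : Fin m,
      (fun rs : Fin d × Fin d => c i rs.1 * c i rs.2) ∈
        Submodule.span (ZMod p)
          (Set.range (fun j : S => fun rs : Fin d × Fin d => c j.1 rs.1 * c j.1 rs.2)))
    (n : ℕ) :
    |((Finset.univ.filter (fun x : Fin d → Fin n → ZMod p =>
        ∀ i : Fin m, ∑ j, (∑ u, c i u * x u j) ^ 2 = 0)).card : ℝ) * (p : ℝ) ^ ℓ
        - (p : ℝ) ^ (d * n)|
      ≤ ((p : ℝ) ^ ℓ - 1) * ((p : ℝ) ^ (d * n) * (p : ℝ) ^ (-(n : ℝ) / 2)) := by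
  classical
  set G : S → Fin d × Fin d → ZMod p :=
    fun k => fun rs : Fin d × Fin d => c k.1 rs.1 * c k.1 rs.2 with hG
  have hsym : ∀ k r s, G k (r, s) = G k (s, r) := fun k r s => mul_comm _ _
  have hind' : ∀ ξ : S → ZMod p, ξ ≠ 0 → (∑ k, ξ k • G k) ≠ 0 := by
    intro ξ hξ hzero
    exact hξ (funext (Fintype.linearIndependent_iff.mp hind ξ hzero))
  have hfilter : (Finset.univ.filter (fun x : Fin d → Fin n → ZMod p =>
        ∀ i : Fin m, ∑ j, (∑ u, c i u * x u j) ^ 2 = 0))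
      = (Finset.univ.filter (fun x : Fin d → Fin n → ZMod p =>
        ∀ k : S, (∑ rs : Fin d × Fin d, G k rs * (∑ j, x rs.1 j * x rs.2 j)) = 0)) := by
    apply Finset.filter_congr
    intro x _
    constructor
    · intro hall k
      have := hall k.1
      rw [expand_sq] at this
      exact this
    · intro hall i
      rw [expand_sq]
      obtain ⟨w, hw⟩ := Submodule.mem_span_range_iff_exists_fun (ZMod p) |>.mp (hmax i)
      have hws : ∀ rs : Fin d × Fin d, (∑ k : S, w k • G k) rs
          = ∑ k : S, w k * G k rs := by
        intro rs
        rw [Finset.sum_apply]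
        exact Finset.sum_congr rfl fun k _ => rfl
      calc ∑ rs : Fin d × Fin d, (c i rs.1 * c i rs.2) * (∑ j, x rs.1 j * x rs.2 j)
          = ∑ rs : Fin d × Fin d, ∑ k : S,
              w k * (G k rs * (∑ j, x rs.1 j * x rs.2 j)) := by
            refine Finset.sum_congr rfl fun rs _ => ?_
            rw [← congrFun hw rs, hws rs, Finset.sum_mul]
            exact Finset.sum_congr rfl fun k _ => by ring
        _ = ∑ k : S, w k * ∑ rs : Fin d × Fin d,
              (G k rs * (∑ j, x rs.1 j * x rs.2 j)) := by
            rw [Finset.sum_comm]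
            exact Finset.sum_congr rfl fun k _ => by rw [Finset.mul_sum]
        _ = 0 := Finset.sum_eq_zero fun k _ => by rw [hall k, mul_zero]
  rw [hfilter]
  have hcardS : Fintype.card S = ℓ := by rw [Fintype.card_coe, hS]
  have := count_bound hp d n G hsym hind'
  rwa [hcardS] at this

-- the alpha counting bound
lemma alpha_count [Fact p.Prime] (hp : Odd p) (n : ℕ) :
    |((Finset.univ.filter (fun y : Fin n → ZMod p =>
        ∑ j, y j ^ 2 = 0)).card : ℝ) * (p : ℝ)
        - (p : ℝ) ^ n|
      ≤ ((p : ℝ) - 1) * ((p : ℝ) ^ n * (p : ℝ) ^ (-(n : ℝ) / 2)) := by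
  classical
  set G : Fin 1 → Fin 1 × Fin 1 → ZMod p := fun _ _ => 1 with hG
  have hsym : ∀ k r s, G k (r, s) = G k (s, r) := fun _ _ _ => rfl
  have hind' : ∀ ξ : Fin 1 → ZMod p, ξ ≠ 0 → (∑ k, ξ k • G k) ≠ 0 := by
    intro ξ hξ hzero
    apply hξ
    funext k
    have h0 := congrFun hzero (0, 0)
    rw [Fin.sum_univ_one] at h0
    simp only [hG, Pi.smul_apply, smul_eq_mul, mul_one, Pi.zero_apply] at h0
    have : k = 0 := Subsingleton.elim _ _
    rw [this]
    exact h0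
  have hcond : ∀ x : Fin 1 → Fin n → ZMod p,
      (∀ k : Fin 1, (∑ rs : Fin 1 × Fin 1, G k rs * (∑ j, x rs.1 j * x rs.2 j)) = 0)
        ↔ ∑ j, (x 0) j ^ 2 = 0 := by
    intro x
    rw [Fin.forall_fin_one]
    have : (∑ rs : Fin 1 × Fin 1, G 0 rs * (∑ j, x rs.1 j * x rs.2 j))
        = ∑ j, (x 0) j ^ 2 := by
      rw [Fintype.sum_prod_type, Fin.sum_univ_one, Fin.sum_univ_one]
      simp only [hG, one_mul]
      exact Finset.sum_congr rfl fun j _ => (sq _).symm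
    rw [this]
  have hcards : ((Finset.univ.filter (fun x : Fin 1 → Fin n → ZMod p =>
        ∀ k : Fin 1, (∑ rs : Fin 1 × Fin 1, G k rs * (∑ j, x rs.1 j * x rs.2 j)) = 0)).card)
      = ((Finset.univ.filter (fun y : Fin n → ZMod p => ∑ j, y j ^ 2 = 0)).card) := by
    refine Finset.card_bij' (fun x _ => x 0) (fun y _ => fun _ => y)
      ?_ ?_ ?_ ?_
    · intro x hx
      rw [Finset.mem_filter] at hx ⊢
      exact ⟨mem_univ _, (hcond x).mp hx.2⟩
    · intro y hy
      rw [Finset.mem_filter] at hy ⊢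
      exact ⟨mem_univ _, (hcond (fun _ => y)).mpr hy.2⟩
    · intro x _
      funext u
      rw [Subsingleton.elim u (0 : Fin 1)]
    · intro y _
      rfl
  have h := count_bound hp 1 n G hsym hind'
  simp only [Fintype.card_fin, pow_one, one_mul] at h
  rw [← hcards]
  convert h using 4
  norm_cast
end QESD


open QESD

/-- If the squares of the forms `L₁,…,L_m` are linearly dependent, with maximal
square-independent subsystem of size `ℓ < m`, then for the quadric
`A = {x ∈ 𝔽_p^n : xᵀx = 0}` the probability that every `Lᵢ(x)` lies in `A` is at least
`p^{-ℓ} − p^{-n/2}`; in particular, for large `n` it exceeds `α^m + ε` for some `ε > 0`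
depending only on `p`, `ℓ`, `m`, where `α` is the density of `A`. -/
theorem quadric_excess_square_dependent (p : ℕ) [Fact p.Prime] (hp : Odd p)
    (d m ℓ : ℕ) (hℓ : ℓ < m) (c : Fin m → Fin d → ZMod p)
    (S : Finset (Fin m)) (hS : S.card = ℓ)
    (hind : LinearIndependent (ZMod p)
      (fun i : S => fun rs : Fin d × Fin d => c i.1 rs.1 * c i.1 rs.2))
    (hmax : ∀ i : Fin m,
      (fun rs : Fin d × Fin d => c i rs.1 * c i rs.2) ∈
        Submodule.span (ZMod p)
          (Set.range (fun j : S => fun rs : Fin d × Fin d => c j.1 rs.1 * c j.1 rs.2)))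
    (P α : ℕ → ℝ)
    (hP : ∀ n, P n = ((Finset.univ.filter (fun x : Fin d → Fin n → ZMod p =>
        ∀ i : Fin m, ∑ j, (∑ u, c i u * x u j) ^ 2 = 0)).card : ℝ) /
        (Fintype.card (Fin d → Fin n → ZMod p) : ℝ))
    (hα : ∀ n, α n = ((Finset.univ.filter (fun y : Fin n → ZMod p =>
        ∑ j, y j ^ 2 = 0)).card : ℝ) / ((p : ℝ) ^ n)) :
    (∀ n, P n ≥ (p : ℝ) ^ (-(ℓ : ℝ)) - (p : ℝ) ^ (-(n : ℝ) / 2)) ∧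
      ∃ ε > (0 : ℝ), ∃ N : ℕ, ∀ n ≥ N, P n ≥ α n ^ m + ε := by
  have hp1 : (1 : ℝ) < p := by exact_mod_cast (Fact.out : p.Prime).one_lt
  have hp0 : (0 : ℝ) < p := lt_trans one_pos hp1
  have hPlow : ∀ n : ℕ, P n ≥ (p : ℝ) ^ (-(ℓ : ℝ)) - (p : ℝ) ^ (-(n : ℝ) / 2) := by
    intro n
    have key := P_lower hp d m ℓ c S hS hind hmax n
    rw [hP n]
    have hcard : Fintype.card (Fin d → Fin n → ZMod p) = p ^ (d * n) := by
      rw [Fintype.card_fun, Fintype.card_fun, ZMod.card, Fintype.card_fin, Fintype.card_fin,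
        ← pow_mul, Nat.mul_comm]
    rw [hcard]
    set Nc : ℝ := ((Finset.univ.filter (fun x : Fin d → Fin n → ZMod p =>
        ∀ i : Fin m, ∑ j, (∑ u, c i u * x u j) ^ 2 = 0)).card : ℝ) with hNc
    set a : ℝ := (p : ℝ) ^ ℓ with ha_def
    set D : ℝ := (p : ℝ) ^ (d * n) with hD_def
    set e : ℝ := (p : ℝ) ^ (-(n : ℝ) / 2) with he_def
    have hL : (p : ℝ) ^ (-(ℓ : ℝ)) = a⁻¹ := by
      rw [ha_def, ← Real.rpow_natCast (p : ℝ) ℓ, ← Real.rpow_neg hp0.le]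
    have hDcast : ((p ^ (d * n) : ℕ) : ℝ) = D := by push_cast; rfl
    rw [hDcast, hL]
    have ha1 : 1 ≤ a := one_le_pow₀ hp1.le
    have ha0 : 0 < a := lt_of_lt_of_le one_pos ha1
    have hD : 0 < D := by rw [hD_def]; positivity
    have he : 0 < e := Real.rpow_pos_of_pos hp0 _
    have h1 : D - (a - 1) * (D * e) ≤ Nc * a := by
      have := (abs_le.mp key).1
      linarith
    have hgoal : a⁻¹ - e ≤ Nc / D := by
      rw [le_div_iff₀ hD]
      have hainv : a * a⁻¹ = 1 := mul_inv_cancel₀ (ne_of_gt ha0)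
      nlinarith [h1, hainv, mul_pos hD he, mul_nonneg (mul_nonneg hD.le he.le)
        (sub_nonneg.mpr ha1), ha0, hD.le, he.le]
    exact hgoal
  refine ⟨hPlow, ?_⟩
  have halpha_nonneg : ∀ n, 0 ≤ α n := by
    intro n; rw [hα n]; positivity
  have halpha_up : ∀ n : ℕ, α n ≤ 1 / (p : ℝ) + (p : ℝ) ^ (-(n : ℝ) / 2) := by
    intro n
    have key := alpha_count (p := p) hp n
    rw [hα n]
    set M : ℝ := ((Finset.univ.filter (fun y : Fin n → ZMod p =>
        ∑ j, y j ^ 2 = 0)).card : ℝ) with hM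
    set e : ℝ := (p : ℝ) ^ (-(n : ℝ) / 2) with he_def
    have he : 0 < e := Real.rpow_pos_of_pos hp0 _
    have hpn : (0 : ℝ) < (p : ℝ) ^ n := by positivity
    have h1 : M * p - (p : ℝ) ^ n ≤ ((p : ℝ) - 1) * ((p : ℝ) ^ n * e) := (abs_le.mp key).2
    rw [div_le_iff₀ hpn]
    have hpinv : (1 / (p : ℝ)) * p = 1 := by field_simp
    nlinarith [h1, hpinv, mul_pos hpn he, hp0, he.le, hpn.le]
  -- limits
  set r : ℝ := (p : ℝ) ^ (-(1 : ℝ) / 2) with hr_def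
  have hr0 : 0 ≤ r := (Real.rpow_pos_of_pos hp0 _).le
  have hr1 : r < 1 := Real.rpow_lt_one_of_one_lt_of_neg hp1 (by norm_num)
  have hecomp : ∀ n : ℕ, (p : ℝ) ^ (-(n : ℝ) / 2) = r ^ n := by
    intro n
    rw [hr_def, ← Real.rpow_natCast ((p : ℝ) ^ ((-(1 : ℝ)) / 2)) n, ← Real.rpow_mul hp0.le]
    congr 1
    ring
  have he_tendsto : Filter.Tendsto (fun n : ℕ => (p : ℝ) ^ (-(n : ℝ) / 2))
      Filter.atTop (nhds 0) := by
    have := tendsto_pow_atTop_nhds_zero_of_lt_one hr0 hr1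
    simpa [← hecomp] using this
  set L : ℝ := (p : ℝ) ^ (-(ℓ : ℝ)) with hL_def
  have hLm : (1 / (p : ℝ)) ^ m < L := by
    have h2 : (1 / (p : ℝ)) ^ m = (p : ℝ) ^ (-(m : ℝ)) := by
      rw [one_div, inv_pow, ← Real.rpow_natCast (p : ℝ) m, ← Real.rpow_neg hp0.le]
    rw [h2, hL_def]
    apply (Real.rpow_lt_rpow_left_iff hp1).mpr
    have : (ℓ : ℝ) < (m : ℝ) := by exact_mod_cast hℓ
    linarith
  set ε : ℝ := (L - (1 / (p : ℝ)) ^ m) / 3 with hε_def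
  have hε : 0 < ε := by
    rw [hε_def]
    have := sub_pos.mpr hLm
    linarith
  refine ⟨ε, hε, ?_⟩
  have hg : Filter.Tendsto
      (fun n : ℕ => (1 / (p : ℝ) + (p : ℝ) ^ (-(n : ℝ) / 2)) ^ m + (p : ℝ) ^ (-(n : ℝ) / 2))
      Filter.atTop (nhds ((1 / (p : ℝ) + 0) ^ m + 0)) :=
    ((tendsto_const_nhds.add he_tendsto).pow m).add he_tendsto
  have hlt : (1 / (p : ℝ) + 0) ^ m + 0 < L - ε := by
    rw [add_zero, add_zero, hε_def]
    linarith [hLm]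
  obtain ⟨N, hN⟩ := Filter.eventually_atTop.mp (hg.eventually_lt_const hlt)
  refine ⟨N, fun n hn => ?_⟩
  have h1 := hPlow n
  have h3 := hN n hn
  have h4 : α n ^ m ≤ (1 / (p : ℝ) + (p : ℝ) ^ (-(n : ℝ) / 2)) ^ m :=
    pow_le_pow_left₀ (halpha_nonneg n) (halpha_up n) m
  have := Real.rpow_pos_of_pos hp0 (-(n : ℝ) / 2)
  linarith [h1, h3, h4]
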